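/- For all D0, D1 ≥ 1 and C > 0 there exists a constant D = D(D0, D1, C) with the following property. Let r > 0 and let M be a nonempty finite set endowed with two metrics d0 and d1 such that |d0(x,y) − d1(x,y)| ≤ 2r for all x,y ∈ M, such that (M,d0) embeds into L1 with distortion at most D0 and (M,d1) embeds into L1 with distortion at most D1, and such that d1(x,y) ≤ C·d0(x,y) for all x,y ∈ M. Then the r-twisted union (M × {0,1}, d) of (M,d0) and (M,d1) embeds into L1 with distortion at most D. -/

import Mathlib

open MeasureTheory

/-- `d` is a metric on `M`. -/
def IsMetric {M : Type*} (d : M → M → ℝ) : Prop :=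
  (∀ x, d x x = 0) ∧ (∀ x y, x ≠ y → 0 < d x y) ∧
  (∀ x y, d x y = d y x) ∧ (∀ x y z, d x z ≤ d x y + d y z)

/-- `(M, f)` embeds into (some) `L₁` with distortion at most `K`, in the
generalized sense allowing `f` to be an arbitrary nonnegative function. -/
def EmbedsL1 {M : Type*} (f : M → M → ℝ) (K : ℝ) : Prop :=
  ∃ (Ω : Type) (_ : MeasurableSpace Ω) (μ : Measure Ω) (Ψ : M → Lp ℝ 1 μ),
    ∀ x y, f x y ≤ ‖Ψ x - Ψ y‖ ∧ ‖Ψ x - Ψ y‖ ≤ K * f x y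

/-- The metric of the (generalized) twisted union of `(M, d0)` and `(M, d1)`
with joining function `r`, realized on `M × Bool` (`false` plays the role of
`0` and `true` the role of `1`). -/
noncomputable def twistedDist {M : Type*} (d0 d1 : M → M → ℝ) (r : M → ℝ) :
    M × Bool → M × Bool → ℝ
  | (x, false), (y, false) => d0 x y
  | (x, true),  (y, true)  => d1 x y
  | (x, false), (y, true)  => ⨅ z : M, d0 x z + d1 z y + r z
  | (x, true),  (y, false) => ⨅ z : M, d0 y z + d1 z x + r z

set_option maxHeartbeats 1000000
section TwistedAux
open MeasureTheory Finset

section CutLen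
open scoped Classical ENNReal

variable {M : Type} [Fintype M]

/-- Length of the interval of thresholds whose strict upper level set equals `A`. -/
noncomputable def cutLen (a : M → ℝ) (A : Finset M) : ℝ :=
  if h : A.Nonempty ∧ Aᶜ.Nonempty then
    max (A.inf' h.1 a - Aᶜ.sup' h.2 a) 0 else 0

lemma cutLen_nonneg (a : M → ℝ) (A : Finset M) : 0 ≤ cutLen a A := by
  unfold cutLen; split <;> simp

lemma cutLen_le (a : M → ℝ) (A : Finset M) {x y : M} (hx : x ∈ A) (hy : y ∉ A) :
    cutLen a A ≤ |a x - a y| := by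
  have h : A.Nonempty ∧ Aᶜ.Nonempty := ⟨⟨x, hx⟩, ⟨y, by simpa using hy⟩⟩
  rw [cutLen, dif_pos h]
  have h1 : A.inf' h.1 a ≤ a x := Finset.inf'_le _ hx
  have h2 : a y ≤ Aᶜ.sup' h.2 a := Finset.le_sup' _ (by simpa using hy)
  have : A.inf' h.1 a - Aᶜ.sup' h.2 a ≤ a x - a y := by linarith
  refine max_le (this.trans (le_abs_self _)) (abs_nonneg _)

lemma sum_cutLen_pos (a : M → ℝ) (x y : M) :
    ∑ A ∈ univ.filter (fun A : Finset M => x ∈ A ∧ y ∉ A), cutLen a A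
      = max (a x - a y) 0 := by
  set s : Finset (Finset M) := univ.filter (fun A : Finset M => x ∈ A ∧ y ∉ A) with hs
  set E : Finset M → Set ℝ := fun A => {t | univ.filter (fun z => t < a z) = A} with hE
  have hmem : ∀ {A t}, t ∈ E A ↔ ∀ z, z ∈ A ↔ t < a z := by
    intro A t
    constructor
    · intro h z
      rw [← h]; simp [E]
    · intro h; show _ = _; ext z; simp [h z]
  have hEA : ∀ A ∈ s, ∃ (h : A.Nonempty ∧ Aᶜ.Nonempty),
      E A = Set.Ico (Aᶜ.sup' h.2 a) (A.inf' h.1 a) := by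
    intro A hA
    rw [hs, mem_filter] at hA
    obtain ⟨-, hx, hy⟩ := hA
    refine ⟨⟨⟨x, hx⟩, ⟨y, by simpa using hy⟩⟩, ?_⟩
    ext t
    rw [Set.mem_Ico, hmem]
    constructor
    · intro h
      constructor
      · refine Finset.sup'_le _ _ fun b hb => ?_
        rw [Finset.mem_compl] at hb
        exact not_lt.1 fun hlt => hb ((h b).2 hlt)
      · rw [Finset.lt_inf'_iff]
        exact fun b hb => (h b).1 hb
    · rintro ⟨h1, h2⟩ z
      constructor
      · intro hz
        exact lt_of_lt_of_le h2 (Finset.inf'_le _ hz)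
      · intro hz
        by_contra hzA
        have : a z ≤ Aᶜ.sup' _ a := Finset.le_sup' _ (Finset.mem_compl.2 hzA)
        exact absurd hz (not_lt.2 (this.trans h1))
  have hdisj : (↑s : Set (Finset M)).PairwiseDisjoint E := by
    intro A _ B _ hAB
    simp only [Function.onFun]
    rw [Set.disjoint_left]
    intro t htA htB
    exact hAB (by rw [← (show _ = A from htA), (show _ = B from htB)])
  have hmeasE : ∀ A ∈ s, MeasurableSet (E A) := by
    intro A hA
    obtain ⟨h, hEq⟩ := hEA A hA
    rw [hEq]; exact measurableSet_Ico
  have hunion : (⋃ A ∈ s, E A) = Set.Ico (a y) (a x) := by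
    ext t
    simp only [Set.mem_iUnion, Set.mem_Ico]
    constructor
    · rintro ⟨A, hA, htA⟩
      rw [hs, mem_filter] at hA
      obtain ⟨-, hx, hy⟩ := hA
      rw [hmem] at htA
      exact ⟨not_lt.1 fun h => hy ((htA y).2 h), (htA x).1 hx⟩
    · rintro ⟨h1, h2⟩
      refine ⟨univ.filter (fun z => t < a z), ?_, ?_⟩
      · rw [hs, mem_filter]
        refine ⟨mem_univ _, by simp [h2], by simp [not_lt.2 h1]⟩
      · rw [hmem]; intro z; simp
  have hvol := measure_biUnion_finset hdisj hmeasE (μ := volume)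
  rw [hunion] at hvol
  have hfin : ∀ A ∈ s, volume (E A) ≠ ⊤ := by
    intro A hA
    obtain ⟨h, hEq⟩ := hEA A hA
    rw [hEq, Real.volume_Ico]
    exact ENNReal.ofReal_ne_top
  have := congrArg ENNReal.toReal hvol
  rw [Real.volume_Ico, ENNReal.toReal_ofReal', ENNReal.toReal_sum hfin] at this
  rw [this]
  refine Finset.sum_congr rfl fun A hA => ?_
  obtain ⟨h, hEq⟩ := hEA A hA
  rw [cutLen, dif_pos h, hEq, Real.volume_Ico, ENNReal.toReal_ofReal']

lemma sum_cutLen (a : M → ℝ) (x y : M) :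
    ∑ A ∈ univ.filter (fun A : Finset M => ¬((x ∈ A) ↔ (y ∈ A))), cutLen a A
      = |a x - a y| := by
  have hsplit : univ.filter (fun A : Finset M => ¬((x ∈ A) ↔ (y ∈ A)))
      = univ.filter (fun A : Finset M => x ∈ A ∧ y ∉ A)
        ∪ univ.filter (fun A : Finset M => y ∈ A ∧ x ∉ A) := by
    ext A; simp only [mem_filter, mem_union, mem_univ, true_and]; tauto
  have hdisj : Disjoint (univ.filter (fun A : Finset M => x ∈ A ∧ y ∉ A))
      (univ.filter (fun A : Finset M => y ∈ A ∧ x ∉ A)) := by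
    rw [Finset.disjoint_left]
    intro A hA hB
    rw [mem_filter] at hA hB
    tauto
  rw [hsplit, Finset.sum_union hdisj, sum_cutLen_pos, sum_cutLen_pos]
  rcases le_total (a x) (a y) with h | h
  · rw [max_eq_right (by linarith), max_eq_left (by linarith), abs_of_nonpos (by linarith)]
    ring
  · rw [max_eq_left (by linarith), max_eq_right (by linarith), abs_of_nonneg (by linarith)]
    ring


variable {Ω : Type*} [MeasurableSpace Ω]

lemma measurable_finset_inf' (s : Finset M) (hs : s.Nonempty) (f : M → Ω → ℝ)
    (hf : ∀ i, Measurable (f i)) :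
    Measurable (fun ω => s.inf' hs fun i => f i ω) := by
  induction hs using Finset.Nonempty.cons_induction with
  | singleton a => simpa using hf a
  | cons a s ha hs ih =>
      have h2 : (fun ω => (Finset.cons a s ha).inf' (Finset.cons_nonempty ha) fun i => f i ω)
          = fun ω => (f a ω) ⊓ (s.inf' hs fun i => f i ω) := by
        funext ω; exact Finset.inf'_cons (α := ℝ) (H := hs) (f := fun i => f i ω)
      rw [h2, show (fun ω => (f a ω) ⊓ (s.inf' hs fun i => f i ω))
          = fun ω => min (f a ω) (s.inf' hs fun i => f i ω) from rfl]
      exact (hf a).min ih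

lemma measurable_finset_sup' (s : Finset M) (hs : s.Nonempty) (f : M → Ω → ℝ)
    (hf : ∀ i, Measurable (f i)) :
    Measurable (fun ω => s.sup' hs fun i => f i ω) := by
  induction hs using Finset.Nonempty.cons_induction with
  | singleton a => simpa using hf a
  | cons a s ha hs ih =>
      have h2 : (fun ω => (Finset.cons a s ha).sup' (Finset.cons_nonempty ha) fun i => f i ω)
          = fun ω => (f a ω) ⊔ (s.sup' hs fun i => f i ω) := by
        funext ω; exact Finset.sup'_cons (α := ℝ) (H := hs) (f := fun i => f i ω)
      rw [h2, show (fun ω => (f a ω) ⊔ (s.sup' hs fun i => f i ω))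
          = fun ω => max (f a ω) (s.sup' hs fun i => f i ω) from rfl]
      exact (hf a).max ih

lemma measurable_cutLen (g : M → Ω → ℝ) (hg : ∀ z, Measurable (g z)) (A : Finset M) :
    Measurable (fun ω => cutLen (fun z => g z ω) A) := by
  unfold cutLen
  by_cases h : A.Nonempty ∧ Aᶜ.Nonempty
  · simp only [dif_pos h]
    exact ((measurable_finset_inf' _ h.1 _ hg).sub
      (measurable_finset_sup' _ h.2 _ hg)).max measurable_const
  · simp only [dif_neg h]; exact measurable_const

/-- Finite cut decomposition of the metric induced by a map into `L₁`. -/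
lemma exists_cutRep {μ : Measure Ω} (Ψ : M → Lp ℝ 1 μ) :
    ∃ w : Finset M → ℝ, (∀ A, 0 ≤ w A) ∧
      ∀ x y, ‖Ψ x - Ψ y‖
        = ∑ A ∈ univ.filter (fun A : Finset M => ¬((x ∈ A) ↔ (y ∈ A))), w A := by
  set g : M → Ω → ℝ := fun z => ⇑(Ψ z) with hg
  have hgm : ∀ z, Measurable (g z) :=
    fun z => (Lp.stronglyMeasurable (Ψ z)).measurable
  set lam : Finset M → ℝ≥0∞ :=
    fun A => ∫⁻ ω, ENNReal.ofReal (cutLen (fun z => g z ω) A) ∂μ with hlam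
  have hsub : ∀ x y : M, ∫⁻ ω, ENNReal.ofReal (|g x ω - g y ω|) ∂μ
      = eLpNorm (⇑(Ψ x - Ψ y)) 1 μ := by
    intro x y
    rw [eLpNorm_one_eq_lintegral_enorm]
    refine lintegral_congr_ae ?_
    filter_upwards [Lp.coeFn_sub (Ψ x) (Ψ y)] with ω hω
    rw [hω, Pi.sub_apply, ← Real.norm_eq_abs, ofReal_norm]
  have hlam_fin : ∀ A : Finset M, A.Nonempty → Aᶜ.Nonempty → lam A ≠ ⊤ := by
    intro A hA hAc
    obtain ⟨x, hx⟩ := hA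
    obtain ⟨y, hy⟩ := hAc
    rw [Finset.mem_compl] at hy
    have hle : lam A ≤ eLpNorm (⇑(Ψ x - Ψ y)) 1 μ := by
      rw [← hsub]
      exact lintegral_mono fun ω => ENNReal.ofReal_le_ofReal (cutLen_le _ _ hx hy)
    exact (hle.trans_lt (Lp.eLpNorm_lt_top _)).ne
  refine ⟨fun A => (lam A).toReal, fun A => ENNReal.toReal_nonneg, fun x y => ?_⟩
  have key : eLpNorm (⇑(Ψ x - Ψ y)) 1 μ
      = ∑ A ∈ univ.filter (fun A : Finset M => ¬((x ∈ A) ↔ (y ∈ A))), lam A := by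
    rw [← hsub]
    rw [← lintegral_finset_sum _ (fun A _ => (measurable_cutLen g hgm A).ennreal_ofReal)]
    refine lintegral_congr fun ω => ?_
    rw [← ENNReal.ofReal_sum_of_nonneg (fun A _ => cutLen_nonneg _ _), sum_cutLen]
  have hnorm : ‖Ψ x - Ψ y‖ = (eLpNorm (⇑(Ψ x - Ψ y)) 1 μ).toReal := by
    rw [Lp.norm_def]
  rw [hnorm, key, ENNReal.toReal_sum]
  intro A hA
  rw [mem_filter] at hA
  have hxy : (x ∈ A ∧ y ∉ A) ∨ (y ∈ A ∧ x ∉ A) := by tauto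
  rcases hxy with ⟨h1, h2⟩ | ⟨h1, h2⟩
  · exact hlam_fin A ⟨x, h1⟩ ⟨y, Finset.mem_compl.2 h2⟩
  · exact hlam_fin A ⟨y, h1⟩ ⟨x, Finset.mem_compl.2 h2⟩



end CutLen

section FinEmbed

/-- Realizing a finite weighted ℓ₁ embedding as an `Lp` embedding. -/
lemma embedsL1_of_finite_family {X : Type*} (f : X → X → ℝ) (K : ℝ) (Ω : Type) [Fintype Ω]
    (F : X → Ω → ℝ)
    (h : ∀ p q, f p q ≤ ∑ i, |F p i - F q i| ∧ (∑ i, |F p i - F q i|) ≤ K * f p q) :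
    EmbedsL1 f K := by
  letI : MeasurableSpace Ω := ⊤
  haveI : MeasurableSingletonClass Ω := ⟨fun _ => trivial⟩
  have hmeas : ∀ p : X, Measurable (F p) := fun p => measurable_from_top
  have hmem : ∀ p : X, MemLp (F p) 1 Measure.count := by
    intro p
    refine MemLp.mono_exponent (q := ⊤) ?_ le_top
    refine memLp_top_of_bound (hmeas p).aestronglyMeasurable (∑ j, ‖F p j‖)
      (ae_of_all _ fun i => ?_)
    exact Finset.single_le_sum (f := fun j => ‖F p j‖) (fun _ _ => norm_nonneg _) (mem_univ i)
  have hnorm : ∀ p q : X,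
      ‖(hmem p).toLp (F p) - (hmem q).toLp (F q)‖ = ∑ i, |F p i - F q i| := by
    intro p q
    rw [← MemLp.toLp_sub, Lp.norm_toLp, eLpNorm_one_eq_lintegral_enorm,
      MeasureTheory.lintegral_count, tsum_fintype, ENNReal.toReal_sum
        (fun i _ => enorm_ne_top)]
    refine Finset.sum_congr rfl fun i _ => ?_
    simp [Real.norm_eq_abs]
  exact ⟨Ω, ⊤, Measure.count, fun p => (hmem p).toLp (F p), fun p q =>
    ⟨(h p q).1.trans_eq (hnorm p q).symm, (hnorm p q) ▸ (h p q).2⟩⟩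

end FinEmbed

section Prob
open scoped Classical

variable {K : Type*} [Fintype K] [DecidableEq K]

lemma sum_prod_bool (q : K → Bool → ℝ) :
    ∑ b : K → Bool, ∏ A, q A (b A) = ∏ A, (q A false + q A true) := by
  have h1 : ∀ A : K, q A false + q A true = ∑ j : Bool, q A j := by
    intro A; rw [Fintype.sum_bool]; ring
  calc ∑ b : K → Bool, ∏ A, q A (b A)
      = ∑ b ∈ Fintype.piFinset (fun _ : K => (univ : Finset Bool)), ∏ A, q A (b A) := by
        rw [Fintype.piFinset_univ]
    _ = ∏ A, ∑ j : Bool, q A j := (Finset.prod_univ_sum _ _).symm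
    _ = ∏ A, (q A false + q A true) := by rw [← funext h1]  -- fix

variable (p : K → ℝ)

/-- Product Bernoulli weight. -/
noncomputable def bw (b : K → Bool) : ℝ := ∏ A, (if b A then p A else 1 - p A)

lemma bw_nonneg (hp : ∀ A, 0 ≤ p A ∧ p A ≤ 1) (b : K → Bool) : 0 ≤ bw p b :=
  Finset.prod_nonneg fun A _ => by
    by_cases h : b A <;> simp [h, (hp A).1, sub_nonneg.2 (hp A).2]

lemma sum_bw (hp : ∀ A, 0 ≤ p A ∧ p A ≤ 1) : ∑ b : K → Bool, bw p b = 1 := by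
  unfold bw
  rw [sum_prod_bool (fun A t => if t then p A else 1 - p A)]
  simp

lemma sum_bw_restricted (hp : ∀ A, 0 ≤ p A ∧ p A ≤ 1) (T : Finset K) :
    ∑ b : K → Bool, (if (∀ A ∈ T, b A = false) then bw p b else 0)
      = ∏ A ∈ T, (1 - p A) := by
  have key : ∀ b : K → Bool, (if (∀ A ∈ T, b A = false) then bw p b else 0)
      = ∏ A, (if b A then (if A ∈ T then 0 else p A) else 1 - p A) := by
    intro b
    by_cases h : ∀ A ∈ T, b A = false
    · rw [if_pos h]
      unfold bw
      refine Finset.prod_congr rfl fun A _ => ?_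
      by_cases hbA : b A
      · have : A ∉ T := fun hAT => by simp [h A hAT] at hbA
        simp [hbA, this]
      · simp [hbA]
    · rw [if_neg h]
      push_neg at h
      obtain ⟨A, hAT, hbA⟩ := h
      refine (Finset.prod_eq_zero (mem_univ A) ?_).symm
      rw [ne_eq, Bool.not_eq_false] at hbA
      simp [hbA, hAT]
  rw [Finset.sum_congr rfl fun b _ => key b,
    sum_prod_bool (fun A t => if t then (if A ∈ T then 0 else p A) else 1 - p A)]
  have h2 : ∀ A ∈ (univ : Finset K), ((if (false : Bool) = true then (if A ∈ T then 0 else p A) else 1 - p A)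
      + (if (true : Bool) = true then (if A ∈ T then 0 else p A) else 1 - p A))
      = if A ∈ T then 1 - p A else 1 := by
    intro A _
    by_cases hAT : A ∈ T <;> simp [hAT]
  rw [Finset.prod_congr rfl h2, Finset.prod_ite_mem, univ_inter]

lemma prod_one_sub_le_one (T : Finset K) (hp : ∀ A, 0 ≤ p A ∧ p A ≤ 1) :
    0 ≤ ∏ A ∈ T, (1 - p A) ∧ ∏ A ∈ T, (1 - p A) ≤ 1 := by
  constructor
  · exact Finset.prod_nonneg fun A _ => sub_nonneg.2 (hp A).2
  · exact Finset.prod_le_one (fun A _ => sub_nonneg.2 (hp A).2)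
      (fun A _ => by linarith [(hp A).1])

lemma one_sub_sum_le_prod (T : Finset K) (hp : ∀ A, 0 ≤ p A ∧ p A ≤ 1) :
    1 - ∑ A ∈ T, p A ≤ ∏ A ∈ T, (1 - p A) := by
  induction T using Finset.induction_on with
  | empty => simp
  | insert a T' hA ih =>
    rw [Finset.prod_insert hA, Finset.sum_insert hA]
    have h0 : 0 ≤ ∏ A ∈ T', (1 - p A) := Finset.prod_nonneg fun A _ => sub_nonneg.2 (hp A).2
    have h1 : ∏ A ∈ T', (1 - p A) ≤ 1 := Finset.prod_le_one
      (fun A _ => sub_nonneg.2 (hp A).2) (fun A _ => by linarith [(hp A).1])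
    nlinarith [(hp a).1, (hp a).2]

lemma prod_one_sub_le_exp (T : Finset K) (hp : ∀ A, 0 ≤ p A ∧ p A ≤ 1) :
    ∏ A ∈ T, (1 - p A) ≤ Real.exp (-(∑ A ∈ T, p A)) := by
  calc ∏ A ∈ T, (1 - p A) ≤ ∏ A ∈ T, Real.exp (-(p A)) := by
        refine Finset.prod_le_prod (fun A _ => sub_nonneg.2 (hp A).2) fun A _ => ?_
        have := Real.add_one_le_exp (-(p A))
        linarith
    _ = Real.exp (∑ A ∈ T, -(p A)) := (Real.exp_sum _ _).symm
    _ = Real.exp (-(∑ A ∈ T, p A)) := by rw [Finset.sum_neg_distrib]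

lemma one_sub_exp_ge (s : ℝ) (hs : 0 ≤ s) :
    (1 - Real.exp (-1)) * min s 1 ≤ 1 - Real.exp (-s) := by
  rcases le_total s 1 with h | h
  · rw [min_eq_left h]
    have hconv := convexOn_exp.2 (Set.mem_univ (-1)) (Set.mem_univ 0) hs
      (by linarith : (0:ℝ) ≤ 1 - s) (by ring)
    simp only [smul_eq_mul, mul_zero, add_zero, Real.exp_zero, mul_one] at hconv
    have : Real.exp (s * -1) ≤ s * Real.exp (-1) + (1 - s) := hconv
    rw [mul_neg_one] at this
    nlinarith
  · rw [min_eq_right h]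
    have : Real.exp (-s) ≤ Real.exp (-1) := Real.exp_le_exp.2 (by linarith)
    linarith

end Prob

/-- Ambient finite coordinate type for the twisted-union embedding. -/
abbrev TwOmega (M : Type) : Type :=
  (Finset M ⊕ ((Finset M → Bool) × (Finset M → Bool))) ⊕ Unit

end TwistedAux

/-- Corollary 5.3: the `r`-twisted union of two `L₁`-embeddable metrics with
`d1 ≤ C·d0` embeds into `L₁` with distortion depending only on `D0, D1, C`. -/
theorem twisted_union_embeds_L1_of_d1_le_Cd0
    (D0 D1 : ℝ) (hD0 : 1 ≤ D0) (hD1 : 1 ≤ D1) (C : ℝ) (hC : 0 < C) :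
    ∃ D : ℝ,
      ∀ (M : Type) [Fintype M] [Nonempty M]
        (d0 d1 : M → M → ℝ) (r : ℝ), 0 < r →
        IsMetric d0 → IsMetric d1 →
        (∀ x y, |d0 x y - d1 x y| ≤ 2 * r) →
        EmbedsL1 d0 D0 → EmbedsL1 d1 D1 →
        (∀ x y, d1 x y ≤ C * d0 x y) →
        EmbedsL1 (twistedDist d0 d1 (fun _ => r)) D := by
  classical
  set c0 : ℝ := (1 - Real.exp (-1)) / 4 with hc0
  have hexp1 : Real.exp (-1) < 1 := by
    rw [← Real.exp_zero]; exact Real.exp_lt_exp.2 (by norm_num)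
  have hexp0 : (0:ℝ) < Real.exp (-1) := Real.exp_pos _
  have hc0pos : 0 < c0 := by rw [hc0]; linarith
  have hc0half : c0 ≤ 1/2 := by rw [hc0]; linarith
  set Kbig : ℝ := C * D1 + D0 + 3 * D1 + 6 with hKbig
  refine ⟨Kbig / c0, ?_⟩
  intro M _ _ d0 d1 r hr hm0 hm1 hnear hE0 hE1 hCd
  obtain ⟨h0refl, h0pos, h0symm, h0tri⟩ := hm0
  obtain ⟨h1refl, h1pos, h1symm, h1tri⟩ := hm1
  have hd0nn : ∀ x y : M, 0 ≤ d0 x y := by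
    intro x y; rcases eq_or_ne x y with rfl | h
    · rw [h0refl]
    · exact (h0pos x y h).le
  have hd1nn : ∀ x y : M, 0 ≤ d1 x y := by
    intro x y; rcases eq_or_ne x y with rfl | h
    · rw [h1refl]
    · exact (h1pos x y h).le
  obtain ⟨Ω0, m0, μ0, Ψ0, hΨ0⟩ := hE0
  obtain ⟨Ω1, m1, μ1, Ψ1, hΨ1⟩ := hE1
  obtain ⟨w0, hw0n, hw0⟩ := exists_cutRep Ψ0
  obtain ⟨w1, hw1n, hw1⟩ := exists_cutRep Ψ1
  set δ0 : M → M → ℝ := fun x y => ‖Ψ0 x - Ψ0 y‖ with hδ0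
  set δ1 : M → M → ℝ := fun x y => ‖Ψ1 x - Ψ1 y‖ with hδ1
  have hδ0l : ∀ x y, d0 x y ≤ δ0 x y := fun x y => (hΨ0 x y).1
  have hδ0u : ∀ x y, δ0 x y ≤ D0 * d0 x y := fun x y => (hΨ0 x y).2
  have hδ1l : ∀ x y, d1 x y ≤ δ1 x y := fun x y => (hΨ1 x y).1
  have hδ1u : ∀ x y, δ1 x y ≤ D1 * d1 x y := fun x y => (hΨ1 x y).2
  have hδ1nn : ∀ x y, 0 ≤ δ1 x y := fun x y => (hd1nn x y).trans (hδ1l x y)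
  have hδ1sym : ∀ x y, δ1 x y = δ1 y x := fun x y => norm_sub_rev _ _
  set sepF : M → M → Finset (Finset M) :=
    fun x y => Finset.univ.filter (fun A : Finset M => ¬((x ∈ A) ↔ (y ∈ A))) with hsepF
  have hw0' : ∀ x y : M, δ0 x y = ∑ A ∈ sepF x y, w0 A := fun x y => hw0 x y
  have hw1' : ∀ x y : M, δ1 x y = ∑ A ∈ sepF x y, w1 A := fun x y => hw1 x y
  set p : Finset M → ℝ := fun A => min (w0 A) r / r with hp_def
  have hp : ∀ A, 0 ≤ p A ∧ p A ≤ 1 := by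
    intro A
    constructor
    · exact div_nonneg (le_min (hw0n A) hr.le) hr.le
    · rw [hp_def, div_le_one hr]
      exact min_le_right _ _
  have hrp : ∀ A, r * p A = min (w0 A) r := by
    intro A; rw [hp_def]; field_simp
  set τ : M → M → ℝ := fun u v => r * (1 - ∏ A ∈ sepF u v, (1 - p A)) with hτ
  have hsum_nonneg : ∀ u v : M, 0 ≤ ∑ A ∈ sepF u v, p A :=
    fun u v => Finset.sum_nonneg fun A _ => (hp A).1
  have hτ_nonneg : ∀ u v, 0 ≤ τ u v := by
    intro u v
    have h1 := (prod_one_sub_le_one p (sepF u v) hp).2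
    have h2 : (0:ℝ) ≤ 1 - ∏ A ∈ sepF u v, (1 - p A) := by linarith
    simp only [hτ]
    exact mul_nonneg hr.le h2
  have hτ_self : ∀ u, τ u u = 0 := by
    intro u
    have h : sepF u u = ∅ := by
      simp only [hsepF]
      ext A
      simp
    simp only [hτ, h, Finset.prod_empty]
    ring
  have hrs : ∀ u v : M, r * ∑ A ∈ sepF u v, p A = ∑ A ∈ sepF u v, min (w0 A) r := by
    intro u v; rw [Finset.mul_sum]; exact Finset.sum_congr rfl fun A _ => hrp A
  have hrs_le : ∀ u v : M, ∑ A ∈ sepF u v, min (w0 A) r ≤ δ0 u v := by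
    intro u v
    rw [hw0' u v]
    exact Finset.sum_le_sum fun A _ => min_le_left _ _
  have hrs_ge : ∀ u v : M, min (δ0 u v) r ≤ ∑ A ∈ sepF u v, min (w0 A) r := by
    intro u v
    by_cases hcase : ∀ A ∈ sepF u v, w0 A ≤ r
    · have h : ∑ A ∈ sepF u v, min (w0 A) r = δ0 u v := by
        rw [hw0' u v]
        exact Finset.sum_congr rfl fun A hA => min_eq_left (hcase A hA)
      rw [h]; exact min_le_left _ _
    · push_neg at hcase
      obtain ⟨A, hA, hrA⟩ := hcase
      have h1 : min (w0 A) r = r := min_eq_right hrA.le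
      have h2 : (r:ℝ) ≤ ∑ A ∈ sepF u v, min (w0 A) r := by
        have h3 := Finset.single_le_sum (f := fun B => min (w0 B) r)
          (fun B _ => le_min (hw0n B) hr.le) hA
        exact le_of_eq_of_le h1.symm h3
      exact (min_le_right _ _).trans h2
  have hτ_le : ∀ u v, τ u v ≤ min (δ0 u v) r := by
    intro u v
    have h1 : 1 - ∏ A ∈ sepF u v, (1 - p A) ≤ ∑ A ∈ sepF u v, p A := by
      have := one_sub_sum_le_prod p (sepF u v) hp; linarith
    have h2 : 1 - ∏ A ∈ sepF u v, (1 - p A) ≤ 1 := by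
      have := (prod_one_sub_le_one p (sepF u v) hp).1; linarith
    refine le_min ?_ ?_
    · calc τ u v ≤ r * ∑ A ∈ sepF u v, p A := by
            simp only [hτ]; exact mul_le_mul_of_nonneg_left h1 hr.le
        _ = ∑ A ∈ sepF u v, min (w0 A) r := hrs u v
        _ ≤ δ0 u v := hrs_le u v
    · calc τ u v ≤ r * 1 := by
            simp only [hτ]; exact mul_le_mul_of_nonneg_left h2 hr.le
        _ = r := mul_one r
  have hτ_ge : ∀ u v, (1 - Real.exp (-1)) * min (δ0 u v) r ≤ τ u v := by
    intro u v
    have h1 : ∏ A ∈ sepF u v, (1 - p A) ≤ Real.exp (-(∑ A ∈ sepF u v, p A)) :=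
      prod_one_sub_le_exp p (sepF u v) hp
    have h2 : (1 - Real.exp (-1)) * min (∑ A ∈ sepF u v, p A) 1
        ≤ 1 - Real.exp (-(∑ A ∈ sepF u v, p A)) :=
      one_sub_exp_ge _ (hsum_nonneg u v)
    have h3 : (1 - Real.exp (-1)) * (r * min (∑ A ∈ sepF u v, p A) 1) ≤ τ u v := by
      have h5 : (1 - Real.exp (-1)) * min (∑ A ∈ sepF u v, p A) 1
          ≤ 1 - ∏ A ∈ sepF u v, (1 - p A) := by linarith
      simp only [hτ]
      calc (1 - Real.exp (-1)) * (r * min (∑ A ∈ sepF u v, p A) 1)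
          = r * ((1 - Real.exp (-1)) * min (∑ A ∈ sepF u v, p A) 1) := by ring
        _ ≤ r * (1 - ∏ A ∈ sepF u v, (1 - p A)) :=
            mul_le_mul_of_nonneg_left h5 hr.le
    have h6 : r * min (∑ A ∈ sepF u v, p A) 1 = min (r * ∑ A ∈ sepF u v, p A) r := by
      rcases le_total (∑ A ∈ sepF u v, p A) 1 with h | h
      · rw [min_eq_left h, min_eq_left (by nlinarith)]
      · rw [min_eq_right h, mul_one, min_eq_right (by nlinarith)]
    have h4 : min (δ0 u v) r ≤ r * min (∑ A ∈ sepF u v, p A) 1 := by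
      rw [h6, hrs u v]
      exact le_min (hrs_ge u v) (min_le_right _ _)
    calc (1 - Real.exp (-1)) * min (δ0 u v) r
        ≤ (1 - Real.exp (-1)) * (r * min (∑ A ∈ sepF u v, p A) 1) :=
          mul_le_mul_of_nonneg_left h4 (by linarith)
      _ ≤ τ u v := h3
  obtain ⟨x0⟩ := (inferInstance : Nonempty M)
  set pat : (Finset M → Bool) → M → (Finset M → Bool) :=
    fun b u A => if u ∈ A then b A else false with hpat
  have pat_eq_iff : ∀ (b : Finset M → Bool) (u v : M),
      pat b u = pat b v ↔ ∀ A ∈ sepF u v, b A = false := by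
    intro b u v
    rw [funext_iff]
    constructor
    · intro h A hA
      simp only [hsepF, Finset.mem_filter] at hA
      have h2 := h A
      simp only [hpat] at h2
      by_cases hu : u ∈ A <;> by_cases hv : v ∈ A
      · exact absurd ⟨fun _ => hv, fun _ => hu⟩ hA.2
      · simpa [hu, hv] using h2
      · simpa [hu, hv] using h2.symm
      · exact absurd ⟨fun h => absurd h hu, fun h => absurd h hv⟩ hA.2
    · intro h A
      simp only [hpat]
      by_cases hsep : ¬((u ∈ A) ↔ (v ∈ A))
      · have hbA : b A = false := h A (by
          simp only [hsepF, Finset.mem_filter]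
          exact ⟨Finset.mem_univ _, hsep⟩)
        by_cases hu : u ∈ A <;> by_cases hv : v ∈ A <;> simp [hu, hv, hbA]
      · push_neg at hsep
        by_cases hu : u ∈ A <;> by_cases hv : v ∈ A <;> simp_all
  set F : M × Bool → TwOmega M → ℝ := fun q => Sum.elim
    (Sum.elim (fun A => w1 A * (if q.1 ∈ A then 1 else 0))
      (fun bσ => (r/2) * bw p bσ.1 * (if bσ.2 = pat bσ.1 (cond q.2 x0 q.1) then 1 else 0)))
    (fun _ => cond q.2 r 0) with hF
  have hBlock1 : ∀ x y : M,
      (∑ A : Finset M, |w1 A * (if x ∈ A then (1:ℝ) else 0)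
        - w1 A * (if y ∈ A then 1 else 0)|) = δ1 x y := by
    intro x y
    rw [hw1' x y]
    simp only [hsepF]
    rw [Finset.sum_filter]
    refine Finset.sum_congr rfl fun A _ => ?_
    by_cases hx : x ∈ A <;> by_cases hy : y ∈ A <;>
      simp [hx, hy, abs_of_nonneg (hw1n A)]
  have hBlock2 : ∀ u v : M,
      (∑ bσ : (Finset M → Bool) × (Finset M → Bool),
        |(r/2) * bw p bσ.1 * (if bσ.2 = pat bσ.1 u then (1:ℝ) else 0)
          - (r/2) * bw p bσ.1 * (if bσ.2 = pat bσ.1 v then 1 else 0)|) = τ u v := by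
    intro u v
    rw [Fintype.sum_prod_type]
    have hinner : ∀ b : Finset M → Bool,
        (∑ σ : Finset M → Bool,
          |(r/2) * bw p b * (if σ = pat b u then (1:ℝ) else 0)
            - (r/2) * bw p b * (if σ = pat b v then 1 else 0)|)
        = r * (bw p b - (if (∀ A ∈ sepF u v, b A = false) then bw p b else 0)) := by
      intro b
      have hcnn : (0:ℝ) ≤ (r/2) * bw p b :=
        mul_nonneg (by linarith) (bw_nonneg p hp b)
      by_cases hpe : pat b u = pat b v
      · rw [if_pos ((pat_eq_iff b u v).1 hpe)]
        rw [Finset.sum_eq_zero fun σ _ => by rw [hpe, sub_self, abs_zero]]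
        ring
      · rw [if_neg (fun h => hpe ((pat_eq_iff b u v).2 h))]
        have hterm : ∀ σ : Finset M → Bool,
            |(r/2) * bw p b * (if σ = pat b u then (1:ℝ) else 0)
              - (r/2) * bw p b * (if σ = pat b v then 1 else 0)|
            = (r/2) * bw p b *
              ((if σ = pat b u then 1 else 0) + (if σ = pat b v then 1 else 0)) := by
          intro σ
          by_cases h1 : σ = pat b u <;> by_cases h2 : σ = pat b v
          · exact absurd (h1.symm.trans h2) hpe
          · simp [h1, h2, hpe, Ne.symm hpe, abs_of_nonneg hcnn]
          · simp [h1, h2, hpe, Ne.symm hpe, abs_of_nonneg hcnn]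
          · simp [h1, h2]
        rw [Finset.sum_congr rfl fun σ _ => hterm σ, ← Finset.mul_sum,
          Finset.sum_add_distrib,
          Finset.sum_ite_eq' Finset.univ (pat b u) (fun _ => (1:ℝ)),
          Finset.sum_ite_eq' Finset.univ (pat b v) (fun _ => (1:ℝ))]
        simp only [Finset.mem_univ, if_pos]
        ring
    rw [Finset.sum_congr rfl fun b _ => hinner b, ← Finset.mul_sum,
      Finset.sum_sub_distrib, sum_bw p hp, sum_bw_restricted p hp (sepF u v)]
  have hBlock3 : ∀ s t : Bool,
      |(cond s r 0) - (cond t r 0)| = (if s = t then 0 else r) := by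
    intro s t
    cases s <;> cases t <;> simp [abs_of_nonneg hr.le]
  have hS : ∀ pq qq : M × Bool, (∑ i : TwOmega M, |F pq i - F qq i|)
      = δ1 pq.1 qq.1 + τ (cond pq.2 x0 pq.1) (cond qq.2 x0 qq.1)
        + (if pq.2 = qq.2 then 0 else r) := by
    intro pq qq
    rw [show (∑ i : TwOmega M, |F pq i - F qq i|)
        = (∑ i : (Finset M ⊕ ((Finset M → Bool) × (Finset M → Bool))) ⊕ Unit,
            |F pq i - F qq i|) from rfl]
    rw [Fintype.sum_sum_type, Fintype.sum_sum_type]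
    simp only [hF, Sum.elim_inl, Sum.elim_inr]
    rw [hBlock1, hBlock2, Fintype.sum_unique, hBlock3]
  have hcross : ∀ x y : M,
      r ≤ (⨅ z : M, d0 x z + d1 z y + r)
      ∧ d1 x y - r ≤ (⨅ z : M, d0 x z + d1 z y + r)
      ∧ (⨅ z : M, d0 x z + d1 z y + r) ≤ d1 x y + r := by
    intro x y
    have hbdd : BddBelow (Set.range fun z : M => d0 x z + d1 z y + r) :=
      (Set.finite_range _).bddBelow
    refine ⟨?_, ?_, ?_⟩
    · refine le_ciInf fun z => ?_
      have h1 := hd0nn x z; have h2 := hd1nn z y; linarith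
    · refine le_ciInf fun z => ?_
      have h1 : d1 x z ≤ d0 x z + 2 * r := by
        have := abs_le.1 (hnear x z); linarith
      have h2 : d1 x y ≤ d1 x z + d1 z y := h1tri x z y
      linarith
    · have h := ciInf_le hbdd x
      rw [h0refl] at h
      linarith
  have hmain : ∀ pq qq : M × Bool,
      c0 * twistedDist d0 d1 (fun _ => r) pq qq ≤ (∑ i : TwOmega M, |F pq i - F qq i|)
      ∧ (∑ i : TwOmega M, |F pq i - F qq i|) ≤ Kbig * twistedDist d0 d1 (fun _ => r) pq qq := by
    rintro ⟨x, s⟩ ⟨y, t⟩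
    cases s <;> cases t
    · -- sheet 0 / sheet 0
      have he : (∑ i : TwOmega M, |F (x, false) i - F (y, false) i|)
          = δ1 x y + τ x y := by
        rw [hS (x, false) (y, false)]; simp
      have hρ : twistedDist d0 d1 (fun _ => r) (x, false) (y, false) = d0 x y := rfl
      rw [he, hρ]
      constructor
      · rcases le_total (d0 x y) (4 * r) with hcase | hcase
        · have h1 : (1 - Real.exp (-1)) * min (δ0 x y) r ≤ τ x y := hτ_ge x y
          have h2 : min (d0 x y) r ≤ min (δ0 x y) r :=
            min_le_min (hδ0l x y) le_rfl
          have h3 : d0 x y / 4 ≤ min (d0 x y) r := by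
            rcases le_total (d0 x y) r with h | h
            · rw [min_eq_left h]; linarith [hd0nn x y]
            · rw [min_eq_right h]; linarith
          have h4 : (1 - Real.exp (-1)) * (d0 x y / 4)
              ≤ (1 - Real.exp (-1)) * min (δ0 x y) r :=
            mul_le_mul_of_nonneg_left (h3.trans h2) (by linarith)
          have h5 := hδ1nn x y
          rw [hc0]
          nlinarith
        · have h1 : d0 x y - 2*r ≤ d1 x y := by
            have := abs_le.1 (hnear x y); linarith
          have h2 : d0 x y / 2 ≤ δ1 x y := by
            have := hδ1l x y; linarith
          have h3 := hτ_nonneg x y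
          nlinarith [hd0nn x y]
      · have h1 : τ x y ≤ δ0 x y := (hτ_le x y).trans (min_le_left _ _)
        have h2 : δ1 x y ≤ D1 * d1 x y := hδ1u x y
        have h3 : d1 x y ≤ C * d0 x y := hCd x y
        have h4 : δ0 x y ≤ D0 * d0 x y := hδ0u x y
        have h5 := hd0nn x y
        have h6 := hd1nn x y
        rw [hKbig]
        nlinarith
    · -- cross : sheet-0 point is x
      have he : (∑ i : TwOmega M, |F (x, false) i - F (y, true) i|)
          = δ1 x y + τ x x0 + r := by
        rw [hS (x, false) (y, true)]; simp
      have hρ : twistedDist d0 d1 (fun _ => r) (x, false) (y, true)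
          = ⨅ z : M, d0 x z + d1 z y + r := rfl
      rw [he, hρ]
      obtain ⟨hv1, hv2, hv3⟩ := hcross x y
      have hτb : τ x x0 ≤ r := (hτ_le x x0).trans (min_le_right _ _)
      have hτnn : 0 ≤ τ x x0 := hτ_nonneg x x0
      have hd1δ : d1 x y ≤ δ1 x y := hδ1l x y
      have hδub : δ1 x y ≤ D1 * d1 x y := hδ1u x y
      constructor
      · have hvnn : (0:ℝ) ≤ ⨅ z : M, d0 x z + d1 z y + r := hr.le.trans hv1
        nlinarith
      · have h1 : d1 x y ≤ 2 * (⨅ z : M, d0 x z + d1 z y + r) := by linarith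
        have h2 : δ1 x y ≤ D1 * (2 * (⨅ z : M, d0 x z + d1 z y + r)) := by
          nlinarith [hd1nn x y]
        rw [hKbig]
        nlinarith [hr.le.trans hv1, hd1nn x y, mul_nonneg hC.le (hd1nn x y)]
    · -- cross : sheet-0 point is y
      have he : (∑ i : TwOmega M, |F (x, true) i - F (y, false) i|)
          = δ1 x y + τ x0 y + r := by
        rw [hS (x, true) (y, false)]; simp
      have hτsym : τ x0 y = τ y x0 := by
        have hsF : sepF x0 y = sepF y x0 := by
          simp only [hsepF]
          ext A
          simp only [Finset.mem_filter]
          tauto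
        simp only [hτ, hsF]
      have hρ : twistedDist d0 d1 (fun _ => r) (x, true) (y, false)
          = ⨅ z : M, d0 y z + d1 z x + r := rfl
      rw [he, hρ, hτsym]
      obtain ⟨hv1, hv2, hv3⟩ := hcross y x
      have hτb : τ y x0 ≤ r := (hτ_le y x0).trans (min_le_right _ _)
      have hτnn : 0 ≤ τ y x0 := hτ_nonneg y x0
      have hd1δ : d1 y x ≤ δ1 y x := hδ1l y x
      have hδub : δ1 y x ≤ D1 * d1 y x := hδ1u y x
      have hsym : δ1 x y = δ1 y x := hδ1sym x y
      rw [hsym]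
      constructor
      · have hvnn : (0:ℝ) ≤ ⨅ z : M, d0 y z + d1 z x + r := hr.le.trans hv1
        nlinarith
      · have h1 : d1 y x ≤ 2 * (⨅ z : M, d0 y z + d1 z x + r) := by linarith
        have h2 : δ1 y x ≤ D1 * (2 * (⨅ z : M, d0 y z + d1 z x + r)) := by
          nlinarith [hd1nn y x]
        rw [hKbig]
        nlinarith [hr.le.trans hv1, hd1nn y x, mul_nonneg hC.le (hd1nn y x)]
    · -- sheet 1 / sheet 1
      have he : (∑ i : TwOmega M, |F (x, true) i - F (y, true) i|)
          = δ1 x y := by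
        rw [hS (x, true) (y, true)]
        simp [hτ_self x0]
      have hρ : twistedDist d0 d1 (fun _ => r) (x, true) (y, true) = d1 x y := rfl
      rw [he, hρ]
      constructor
      · have h1 := hδ1l x y
        nlinarith [hd1nn x y]
      · have h1 := hδ1u x y
        rw [hKbig]
        nlinarith [hd1nn x y, mul_nonneg hC.le (hd1nn x y)]
  refine embedsL1_of_finite_family _ _ (TwOmega M) (fun q i => c0⁻¹ * F q i) ?_
  intro pq qq
  have hscale : (∑ i : TwOmega M, |c0⁻¹ * F pq i - c0⁻¹ * F qq i|)
      = c0⁻¹ * ∑ i : TwOmega M, |F pq i - F qq i| := by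
    rw [Finset.mul_sum]
    refine Finset.sum_congr rfl fun i _ => ?_
    rw [← mul_sub, abs_mul, abs_of_nonneg (inv_nonneg.2 hc0pos.le)]
  rw [hscale]
  obtain ⟨hlow, hup⟩ := hmain pq qq
  constructor
  · calc twistedDist d0 d1 (fun _ => r) pq qq
        = c0⁻¹ * (c0 * twistedDist d0 d1 (fun _ => r) pq qq) := by
          field_simp
      _ ≤ c0⁻¹ * ∑ i : TwOmega M, |F pq i - F qq i| :=
          mul_le_mul_of_nonneg_left hlow (inv_nonneg.2 hc0pos.le)
  · calc c0⁻¹ * (∑ i : TwOmega M, |F pq i - F qq i|)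
        ≤ c0⁻¹ * (Kbig * twistedDist d0 d1 (fun _ => r) pq qq) :=
          mul_le_mul_of_nonneg_left hup (inv_nonneg.2 hc0pos.le)
      _ = Kbig / c0 * twistedDist d0 d1 (fun _ => r) pq qq := by
          rw [div_eq_inv_mul, mul_assoc]
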